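/- Let d and T be positive integers, let λ₀ ≥ 1, and let G_1,…,G_T be symmetric positive semidefinite real d×d matrices each with operator norm at most 1. Define M_0 = λ₀·I_d and M_t = M_{t−1} + G_t for t = 1,…,T. Then Σ_{t=1}^T trace( G_t · M_{t−1}⁻¹ ) ≤ 2·( log det(M_T) − log det(M_0) ). (Each M_t is positive definite, hence invertible.) -/

import Mathlib

open scoped BigOperators
open scoped RealInnerProductSpace
open Matrix

private lemma aux_log_ineq (x : ℝ) (h1 : 1 ≤ x) (h2 : x ≤ 2) :
    x - 1 ≤ 2 * Real.log x := by
  have hx : (0:ℝ) < x := lt_of_lt_of_le one_pos h1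
  have h := Real.log_le_sub_one_of_pos (x := 1/x) (by positivity)
  rw [Real.log_div one_ne_zero (ne_of_gt hx), Real.log_one] at h
  have hinv : x * (1/x) = 1 := by field_simp
  nlinarith [h, hinv, mul_pos hx hx]

private lemma aux_trace_eq_sum {n : Type*} [Fintype n] [DecidableEq n]
    {A : Matrix n n ℝ} (hA : A.IsHermitian) :
    A.trace = ∑ i, hA.eigenvalues i := by
  nth_rewrite 1 [hA.spectral_theorem]
  rw [Unitary.conjStarAlgAut_apply, Matrix.trace_mul_cycle]
  rw [(Matrix.mem_unitaryGroup_iff'.mp (hA.eigenvectorUnitary).2)]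
  simp [Matrix.trace_diagonal, Function.comp]

private lemma aux_norm_one {n : Type*} [Fintype n] [DecidableEq n]
    {A : Matrix n n ℝ} (hA : A.IsHermitian) (i : n) :
    dotProduct (star (⇑(hA.eigenvectorBasis i) : n → ℝ)) ⇑(hA.eigenvectorBasis i) = 1 := by
  have hn := hA.eigenvectorBasis.orthonormal.1 i
  rw [EuclideanSpace.norm_eq] at hn
  have h2 : ∑ j, (hA.eigenvectorBasis i j) ^ 2 = 1 := by
    have := congrArg (fun t : ℝ => t ^ 2) hn
    simpa [Real.sq_sqrt (Finset.sum_nonneg (fun j _ => sq_nonneg _))] using this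
  simpa [dotProduct, pow_two] using h2

private lemma aux_eig_le {n : Type*} [Fintype n] [DecidableEq n]
    {A : Matrix n n ℝ} (hA : A.IsHermitian) (c : ℝ)
    (h : (c • (1 : Matrix n n ℝ) - A).PosSemidef) (i : n) :
    hA.eigenvalues i ≤ c := by
  have h0 := h.dotProduct_mulVec_nonneg ⇑(hA.eigenvectorBasis i)
  rw [Matrix.sub_mulVec, dotProduct_sub, Matrix.smul_mulVec,
    Matrix.one_mulVec, dotProduct_smul, aux_norm_one hA i] at h0
  have he : hA.eigenvalues i
      = dotProduct (star (⇑(hA.eigenvectorBasis i) : n → ℝ))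
          (A.mulVec ⇑(hA.eigenvectorBasis i)) := by
    simpa using hA.eigenvalues_eq i
  rw [← he] at h0
  simpa using sub_nonneg.mp h0

private lemma aux_le_eig {n : Type*} [Fintype n] [DecidableEq n]
    {A : Matrix n n ℝ} (hA : A.IsHermitian) (c : ℝ)
    (h : (A - c • (1 : Matrix n n ℝ)).PosSemidef) (i : n) :
    c ≤ hA.eigenvalues i := by
  have h0 := h.dotProduct_mulVec_nonneg ⇑(hA.eigenvectorBasis i)
  rw [Matrix.sub_mulVec, dotProduct_sub, Matrix.smul_mulVec,
    Matrix.one_mulVec, dotProduct_smul, aux_norm_one hA i] at h0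
  have he : hA.eigenvalues i
      = dotProduct (star (⇑(hA.eigenvectorBasis i) : n → ℝ))
          (A.mulVec ⇑(hA.eigenvectorBasis i)) := by
    simpa using hA.eigenvalues_eq i
  rw [← he] at h0
  simpa using sub_nonneg.mp h0

open scoped MatrixOrder in
private lemma aux_step {n : Type*} [Fintype n] [DecidableEq n]
    {P B : Matrix n n ℝ} (hP : P.PosDef) (hPI : (P - 1).PosSemidef)
    (hB : B.PosSemidef) (hB1 : ((1 : Matrix n n ℝ) - B).PosSemidef) :
    (B * P⁻¹).trace ≤ 2 * (Real.log (P + B).det - Real.log P.det) := by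
  have hPinv : P⁻¹.PosDef := hP.inv
  set R : Matrix n n ℝ := CFC.sqrt P⁻¹ with hRdef
  have hR : R.PosSemidef := (CFC.sqrt_nonneg P⁻¹).posSemidef
  have hRR : R * R = P⁻¹ := CFC.sqrt_mul_sqrt_self P⁻¹ hPinv.posSemidef.nonneg
  have hRH : Rᴴ = R := hR.isHermitian
  have hdetP : 0 < P.det := hP.det_pos
  have hdetPinv : 0 < P⁻¹.det := hPinv.det_pos
  have hdetR : R.det * R.det = P⁻¹.det := by rw [← Matrix.det_mul, hRR]
  have hdetRne : R.det ≠ 0 := by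
    intro h0; rw [h0, mul_zero] at hdetR; linarith
  have hRu : IsUnit R.det := isUnit_iff_ne_zero.mpr hdetRne
  have hRinvR : R⁻¹ * R = 1 := Matrix.nonsing_inv_mul R hRu
  have hRRinv : R * R⁻¹ = 1 := Matrix.mul_nonsing_inv R hRu
  have hPu : IsUnit P.det := isUnit_iff_ne_zero.mpr (ne_of_gt hdetP)
  have hPinvinv : P⁻¹⁻¹ = P := Matrix.nonsing_inv_nonsing_inv P hPu
  have hRinvRinv : R⁻¹ * R⁻¹ = P := by rw [← Matrix.mul_inv_rev, hRR, hPinvinv]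
  set C : Matrix n n ℝ := R * B * R with hCdef
  set D : Matrix n n ℝ := 1 + C with hDdef
  have hC : C.PosSemidef := by
    have := hB.mul_mul_conjTranspose_same R; rwa [hRH] at this
  have hRPR : R * P * R = 1 := by
    rw [← hRinvRinv,
      show R * (R⁻¹ * R⁻¹) * R = (R * R⁻¹) * (R⁻¹ * R) by noncomm_ring,
      hRRinv, hRinvR, one_mul]
  have h1subPinv : ((1 : Matrix n n ℝ) - P⁻¹).PosSemidef := by
    have h2 := hPI.mul_mul_conjTranspose_same R
    rw [hRH] at h2
    have key : R * (P - 1) * R = 1 - P⁻¹ := by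
      rw [Matrix.mul_sub, mul_one, Matrix.sub_mul, hRPR, hRR]
    rwa [key] at h2
  have h1subC : ((1 : Matrix n n ℝ) - C).PosSemidef := by
    have h2 := hB1.mul_mul_conjTranspose_same R
    rw [hRH] at h2
    have key2 : R * (1 - B) * R = P⁻¹ - C := by
      rw [Matrix.mul_sub, mul_one, Matrix.sub_mul, hRR]
    rw [key2] at h2
    have := h1subPinv.add h2
    rwa [sub_add_sub_cancel] at this
  have hD : D.PosSemidef := Matrix.PosSemidef.one.add hC
  have hDh : D.IsHermitian := hD.isHermitian
  have hμ1 : ∀ i, 1 ≤ hDh.eigenvalues i := by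
    intro i
    refine aux_le_eig hDh 1 ?_ i
    rw [one_smul]
    have : D - 1 = C := by rw [hDdef]; abel
    rwa [this]
  have hμ2 : ∀ i, hDh.eigenvalues i ≤ 2 := by
    intro i
    refine aux_eig_le hDh 2 ?_ i
    have : (2:ℝ) • (1 : Matrix n n ℝ) - D = 1 - C := by
      rw [hDdef, two_smul]; abel
    rwa [this]
  have hμpos : ∀ i, 0 < hDh.eigenvalues i := fun i => lt_of_lt_of_le one_pos (hμ1 i)
  have htrC : (B * P⁻¹).trace = C.trace := by
    rw [← hRR, hCdef]
    calc (B * (R * R)).trace = ((B * R) * R).trace := by rw [mul_assoc]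
      _ = (R * (B * R)).trace := Matrix.trace_mul_comm _ _
      _ = (R * B * R).trace := by rw [mul_assoc]
  have htrD : D.trace = ∑ i, hDh.eigenvalues i := aux_trace_eq_sum hDh
  have htrC2 : C.trace = ∑ i, hDh.eigenvalues i - (Fintype.card n : ℝ) := by
    have : D.trace = (1 : Matrix n n ℝ).trace + C.trace := by rw [hDdef, Matrix.trace_add]
    rw [htrD] at this
    rw [Matrix.trace_one] at this
    linarith
  have hmid : R⁻¹ * (R * B * R) * R⁻¹ = B := by
    rw [show R⁻¹ * (R * B * R) * R⁻¹ = (R⁻¹ * R) * B * (R * R⁻¹) by noncomm_ring,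
      hRinvR, hRRinv, one_mul, mul_one]
  have hPB : P + B = R⁻¹ * D * R⁻¹ := by
    rw [hDdef, Matrix.mul_add, mul_one, Matrix.add_mul, hmid, hRinvRinv]
  have hdRinv : R⁻¹.det * R⁻¹.det = P.det := by rw [← Matrix.det_mul, hRinvRinv]
  have hdetD : D.det = ∏ i, hDh.eigenvalues i := by
    simpa using hDh.det_eq_prod_eigenvalues
  have hdetDpos : 0 < D.det := by
    rw [hdetD]; exact Finset.prod_pos (fun i _ => hμpos i)
  have hdet : (P + B).det = P.det * D.det := by
    rw [hPB, Matrix.det_mul, Matrix.det_mul]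
    calc R⁻¹.det * D.det * R⁻¹.det = (R⁻¹.det * R⁻¹.det) * D.det := by ring
      _ = P.det * D.det := by rw [hdRinv]
  have hlog : Real.log (P + B).det - Real.log P.det = ∑ i, Real.log (hDh.eigenvalues i) := by
    rw [hdet, Real.log_mul (ne_of_gt hdetP) (ne_of_gt hdetDpos)]
    rw [hdetD, Real.log_prod (fun i _ => ne_of_gt (hμpos i))]
    ring
  rw [htrC, htrC2, hlog, Finset.mul_sum]
  have hcard : (Fintype.card n : ℝ) = ∑ _i : n, (1:ℝ) := by simp
  rw [hcard, ← Finset.sum_sub_distrib]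
  exact Finset.sum_le_sum fun i _ => aux_log_ineq _ (hμ1 i) (hμ2 i)

/-- Matrix elliptic-potential inequality: for symmetric PSD increments of
operator norm at most 1 added to `M_0 = λ₀·I` with `λ₀ ≥ 1`, the sum of
`trace(G_t M_{t−1}⁻¹)` is bounded by twice the log-determinant increase. -/
theorem trace_sum_le_two_logdet
    (d T : ℕ) (hd : 0 < d) (hT : 0 < T)
    (lam0 : ℝ) (hlam0 : 1 ≤ lam0)
    (G : ℕ → Matrix (Fin d) (Fin d) ℝ)
    (hpsd : ∀ t ∈ Finset.Icc 1 T, (G t).PosSemidef)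
    (hop : ∀ t ∈ Finset.Icc 1 T, ∀ v : EuclideanSpace ℝ (Fin d),
      ‖Matrix.toEuclideanLin (G t) v‖ ≤ ‖v‖)
    (M : ℕ → Matrix (Fin d) (Fin d) ℝ)
    (hM0 : M 0 = lam0 • (1 : Matrix (Fin d) (Fin d) ℝ))
    (hMrec : ∀ t < T, M (t + 1) = M t + G (t + 1)) :
    ∑ t ∈ Finset.Icc 1 T, Matrix.trace (G t * (M (t - 1))⁻¹)
      ≤ 2 * (Real.log (M T).det - Real.log (M 0).det) := by
  -- operator norm bound gives `1 - G t` PSD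
  have hG1 : ∀ t ∈ Finset.Icc 1 T, ((1 : Matrix (Fin d) (Fin d) ℝ) - G t).PosSemidef := by
    intro t ht
    refine Matrix.PosSemidef.of_dotProduct_mulVec_nonneg (Matrix.IsHermitian.sub Matrix.isHermitian_one (hpsd t ht).isHermitian) ?_
    intro x
    set v : EuclideanSpace ℝ (Fin d) := (WithLp.equiv 2 (Fin d → ℝ)).symm x with hv
    have hinner : dotProduct (star x) ((G t).mulVec x)
        = ⟪v, Matrix.toEuclideanLin (G t) v⟫ := by
      simp [Matrix.toEuclideanLin_apply, PiLp.inner_apply, dotProduct, hv]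
      exact Finset.sum_congr rfl fun _ _ => mul_comm _ _
    have hself : dotProduct (star x) x = ‖v‖ ^ 2 := by
      have : ⟪v, v⟫ = ‖v‖ ^ 2 := real_inner_self_eq_norm_sq v
      rw [← this]
      simp [PiLp.inner_apply, dotProduct, hv]
      rw [EuclideanSpace.norm_eq, Real.sq_sqrt (Finset.sum_nonneg fun _ _ => sq_nonneg _)]
      simp [pow_two]
    have hle : ⟪v, Matrix.toEuclideanLin (G t) v⟫
        ≤ ‖v‖ * ‖Matrix.toEuclideanLin (G t) v‖ := real_inner_le_norm _ _
    have hopv := hop t ht v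
    have hnn : (0:ℝ) ≤ ‖v‖ := norm_nonneg _
    rw [Matrix.sub_mulVec, dotProduct_sub, Matrix.one_mulVec, hself, hinner]
    nlinarith [mul_le_mul_of_nonneg_left hopv hnn]
  -- the invariant: each `M t` is PD and `M t - 1` is PSD
  have inv : ∀ t, t ≤ T → (M t).PosDef ∧ ((M t) - 1).PosSemidef := by
    intro t
    induction t with
    | zero =>
      intro _
      rw [hM0, Matrix.smul_one_eq_diagonal]
      constructor
      · exact Matrix.posDef_diagonal_iff.mpr (fun i => by linarith)
      · rw [show (1 : Matrix (Fin d) (Fin d) ℝ) = Matrix.diagonal (fun _ => (1:ℝ)) from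
          (Matrix.diagonal_one).symm, Matrix.diagonal_sub]
        exact Matrix.PosSemidef.diagonal (fun i => by dsimp; linarith)
    | succ t ih =>
      intro h
      have ht : t < T := Nat.lt_of_succ_le h
      obtain ⟨h1, h2⟩ := ih (le_of_lt ht)
      have hGmem : t + 1 ∈ Finset.Icc 1 T := Finset.mem_Icc.mpr ⟨Nat.succ_le_succ (Nat.zero_le t), h⟩
      rw [hMrec t ht]
      refine ⟨h1.add_posSemidef (hpsd (t+1) hGmem), ?_⟩
      have : M t + G (t+1) - 1 = (M t - 1) + G (t+1) := by abel
      rw [this]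
      exact h2.add (hpsd (t+1) hGmem)
  -- per-step bound
  have key : ∀ t ∈ Finset.Icc 1 T, Matrix.trace (G t * (M (t - 1))⁻¹)
      ≤ 2 * (Real.log (M t).det - Real.log (M (t-1)).det) := by
    intro t ht
    obtain ⟨h1t, h2t⟩ := Finset.mem_Icc.mp ht
    have hlt : t - 1 < T := by omega
    have hrec := hMrec (t-1) hlt
    have hsucc : t - 1 + 1 = t := by omega
    rw [hsucc] at hrec
    obtain ⟨hPD, hPI⟩ := inv (t-1) (by omega)
    have := aux_step hPD hPI (hpsd t ht) (hG1 t ht)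
    rwa [← hrec] at this
  refine le_trans (Finset.sum_le_sum key) (le_of_eq ?_)
  rw [← Finset.Ico_add_one_right_eq_Icc, Finset.sum_Ico_eq_sum_range]
  have hTT : T + 1 - 1 = T := by omega
  rw [hTT]
  have hterm : ∀ i ∈ Finset.range T,
      2 * (Real.log (M (1 + i)).det - Real.log (M (1 + i - 1)).det)
        = 2 * (Real.log (M (i + 1)).det - Real.log (M i).det) := by
    intro i _
    rw [show 1 + i - 1 = i from by omega, show 1 + i = i + 1 from by omega]
  rw [Finset.sum_congr rfl hterm, ← Finset.mul_sum,
    Finset.sum_range_sub (fun i => Real.log (M i).det)]
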